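/- arXiv:1008.3211 — 2 statements merged into one kernel-verified Lean document; each statement's English description precedes it below -/
import Mathlib

section
/- Let G be a compact group with Haar measure μ, X a complex Banach space, ρ : G → GL(X) a strongly continuous representation, and F ∈ X' a nonzero continuous linear functional satisfying F(ρ(g)y) = λ(g)F(y) for all g ∈ G, y ∈ X, where λ : G → ℂ is a continuous homomorphism with |λ(g)| = 1. Then there exists a nonzero x₀ ∈ X with ρ(g)x₀ = λ(g)x₀ for all g ∈ G and F(x₀) ≠ 0. -/
open MeasureTheory Filter Topology

/-- For a strongly continuous representation of a compact group on a Banach space and a nonzero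
eigenfunctional `F` with character `λ`, there is an eigenvector `x₀` with `F x₀ ≠ 0`. -/
theorem exists_eigenvector_of_eigenfunctional {G : Type*} [Group G] [TopologicalSpace G]
    [IsTopologicalGroup G] [CompactSpace G] [MeasurableSpace G] [BorelSpace G]
    (μ : Measure G) [μ.IsHaarMeasure]
    {X : Type*} [NormedAddCommGroup X] [NormedSpace ℂ X] [CompleteSpace X]
    (ρ : G →* (X ≃L[ℂ] X)) (hρ : ∀ x : X, Continuous fun g => ρ g x)
    (F : X →L[ℂ] ℂ) (hF : F ≠ 0)
    (lam : G →* ℂ) (hlamc : Continuous lam) (hlam1 : ∀ g, ‖lam g‖ = 1)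
    (heig : ∀ (g : G) (y : X), F (ρ g y) = lam g * F y) :
    ∃ x₀ : X, x₀ ≠ 0 ∧ (∀ g, ρ g x₀ = lam g • x₀) ∧ F x₀ ≠ 0 := by
  obtain ⟨x₁, hx₁⟩ : ∃ x, F x ≠ 0 := by
    by_contra h
    push_neg at h
    exact hF (ContinuousLinearMap.ext fun x => by simp [h x])
  have hconj : ∀ g, (starRingEnd ℂ) (lam g) = (lam g)⁻¹ := by
    intro g
    have h1 : lam g * (starRingEnd ℂ) (lam g) = 1 := by
      rw [Complex.mul_conj]
      norm_cast
      rw [Complex.normSq_eq_norm_sq, hlam1 g]; norm_num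
    exact (inv_eq_of_mul_eq_one_right h1).symm
  set f : G → X := fun h => (starRingEnd ℂ) (lam h) • ρ h x₁ with hf
  have hfcont : Continuous f := (Complex.continuous_conj.comp hlamc).smul (hρ x₁)
  have hfint : Integrable f μ := hfcont.integrable_of_hasCompactSupport (HasCompactSupport.of_compactSpace f)
  set x₀ : X := ∫ h, f h ∂μ with hx₀
  have hFx₀ : F x₀ = (μ Set.univ).toReal • F x₁ := by
    rw [hx₀, ← ContinuousLinearMap.integral_comp_comm F hfint]
    have : ∀ h, F (f h) = F x₁ := by
      intro h
      have hne : lam h ≠ 0 := fun hz => by simpa [hz] using hlam1 h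
      simp only [hf, F.map_smul, heig, smul_eq_mul, hconj]
      rw [inv_mul_cancel_left₀ hne]
    simp only [this]
    rw [integral_const, measureReal_def]
  have hμ0 : μ Set.univ ≠ 0 := (isOpen_univ.measure_pos μ Set.univ_nonempty).ne'
  have hμtop : μ Set.univ ≠ ⊤ := measure_ne_top μ _
  have hFne : F x₀ ≠ 0 := by
    rw [hFx₀]
    exact smul_ne_zero (ENNReal.toReal_ne_zero.mpr ⟨hμ0, hμtop⟩) hx₁
  refine ⟨x₀, fun h0 => hFne (by simp [h0]), ?_, hFne⟩
  intro g
  have hcomm : ρ g x₀ = ∫ h, ρ g (f h) ∂μ :=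
    (ContinuousLinearMap.integral_comp_comm (ρ g : X →L[ℂ] X) hfint).symm
  rw [hcomm]
  have h1 : ∀ h, ρ g (f h) = (fun k => (starRingEnd ℂ) (lam (g⁻¹ * k)) • ρ k x₁) (g * h) := by
    intro h
    simp only [hf, inv_mul_cancel_left, (ρ g).map_smul]
    congr 1
    rw [map_mul ρ g h]
    rfl
  simp only [h1]
  rw [integral_mul_left_eq_self (fun k => (starRingEnd ℂ) (lam (g⁻¹ * k)) • ρ k x₁) g]
  have h2 : ∀ k, (starRingEnd ℂ) (lam (g⁻¹ * k)) • ρ k x₁ = lam g • f k := by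
    intro k
    simp only [hf, smul_smul]
    congr 1
    rw [map_mul lam g⁻¹ k, map_mul (starRingEnd ℂ), map_inv lam, map_inv₀, hconj, inv_inv]
  simp only [h2]
  rw [integral_smul]
end

section
/- Let G be a locally compact group, X a Banach space, π a nonsingular continuous representation of L¹(G) on X with associated bounded strongly continuous group representation ρ (so π = π_ρ), and F ∈ X' an eigenfunctional for π: F(π(f)(x)) = λ(f)F(x) for all f ∈ L¹(G), x ∈ X. Then F is an eigenfunctional for ρ: there is a function λ̃ : G → ℂ with F(ρ(g)(x)) = λ̃(g)F(x) for all g ∈ G and x ∈ X. -/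
open MeasureTheory Filter Topology

/-- A continuous function whose integral against every continuous compactly supported
function vanishes is identically zero (w.r.t. a measure positive on opens, finite on
compacts, on a locally compact regular space). -/
lemma continuous_eq_zero_of_integral_mul_eq_zero {G : Type*} [TopologicalSpace G]
    [RegularSpace G] [LocallyCompactSpace G] [MeasurableSpace G] [BorelSpace G]
    (μ : Measure G) [IsFiniteMeasureOnCompacts μ] [μ.IsOpenPosMeasure]
    (f : G → ℂ) (hf : Continuous f)
    (h : ∀ φ : G → ℂ, Continuous φ → HasCompactSupport φ → ∫ g, φ g * f g ∂μ = 0) :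
    ∀ g, f g = 0 := by
  intro g₀
  obtain ⟨χ, hχsupp, hχnn, hχg⟩ := exists_continuous_nonneg_pos (X := G) g₀
  set φ : G → ℂ := fun h => (χ h : ℂ) * starRingEnd ℂ (f h) with hφdef
  have hφcont : Continuous φ :=
    (Complex.continuous_ofReal.comp χ.continuous).mul ((continuous_star).comp hf)
  have hχc : HasCompactSupport (fun h => (χ h : ℂ)) :=
    hχsupp.comp_left (g := (Complex.ofReal : ℝ → ℂ)) Complex.ofReal_zero
  have hφsupp : HasCompactSupport φ := hχc.mul_right
  have h0 := h φ hφcont hφsupp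
  set r : G → ℝ := fun h => χ h * Complex.normSq (f h) with hrdef
  have hrw : ∀ g, φ g * f g = ((r g : ℝ) : ℂ) := by
    intro g
    simp only [hφdef, hrdef, Complex.ofReal_mul]
    rw [mul_assoc]
    congr 1
    rw [mul_comm, Complex.mul_conj]
  have hrcont : Continuous r := χ.continuous.mul (Complex.continuous_normSq.comp hf)
  have hrsupp : HasCompactSupport r := hχsupp.mul_right
  have hrint : Integrable r μ := hrcont.integrable_of_hasCompactSupport hrsupp
  have hrnn : 0 ≤ r := fun g => mul_nonneg (hχnn g) (Complex.normSq_nonneg _)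
  have hr0 : ∫ g, r g ∂μ = 0 := by
    have : ∫ g, φ g * f g ∂μ = ((∫ g, r g ∂μ : ℝ) : ℂ) := by
      simp_rw [hrw]; exact integral_ofReal
    rw [h0] at this
    exact_mod_cast this.symm
  have hrz : r =ᵐ[μ] 0 := (integral_eq_zero_iff_of_nonneg hrnn hrint).mp hr0
  have : r = 0 := (hrcont.ae_eq_iff_eq μ continuous_zero).mp hrz
  have hr : χ g₀ * Complex.normSq (f g₀) = 0 := by
    have := congrFun this g₀; simpa [hrdef] using this
  rcases mul_eq_zero.mp hr with h1 | h2
  · exact absurd h1 hχg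
  · exact Complex.normSq_eq_zero.mp h2

/-- If `F` is an eigenfunctional for the associated group-algebra representation
`π_ρ(φ)(x) = ∫ φ(g) • ρ(g)x dg` of a bounded strongly continuous representation `ρ`,
then `F` is an eigenfunctional for `ρ` itself. -/
theorem eigenfunctional_of_algebra_eigenfunctional {G : Type*} [Group G] [TopologicalSpace G]
    [IsTopologicalGroup G] [LocallyCompactSpace G] [MeasurableSpace G] [BorelSpace G]
    (μ : Measure G) [μ.IsHaarMeasure]
    {X : Type*} [NormedAddCommGroup X] [NormedSpace ℂ X] [CompleteSpace X]
    (ρ : G →* (X ≃L[ℂ] X)) (hbdd : ∃ M : ℝ, ∀ g, ‖(ρ g : X →L[ℂ] X)‖ ≤ M)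
    (hρ : ∀ x : X, Continuous fun g => ρ g x)
    (F : X →L[ℂ] ℂ) (hF : F ≠ 0) (lam : (G → ℂ) → ℂ)
    (heig : ∀ φ : G → ℂ, Continuous φ → HasCompactSupport φ →
      ∀ x : X, F (∫ g, φ g • ρ g x ∂μ) = lam φ * F x) :
    ∃ lamt : G → ℂ, ∀ (g : G) (x : X), F (ρ g x) = lamt g * F x := by
  -- pick x₀ with F x₀ ≠ 0
  obtain ⟨x₀, hx₀⟩ : ∃ x₀, F x₀ ≠ 0 := by
    by_contra h
    push_neg at h
    exact hF (ContinuousLinearMap.ext fun x => by simp [h x])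
  -- key: ∫ φ g * F(ρ g x) = lam φ * F x for all nice φ
  have key : ∀ (φ : G → ℂ), Continuous φ → HasCompactSupport φ → ∀ x : X,
      ∫ g, φ g * F (ρ g x) ∂μ = lam φ * F x := by
    intro φ hφc hφs x
    have hint : Integrable (fun g => φ g • ρ g x) μ := by
      apply Continuous.integrable_of_hasCompactSupport
      · exact hφc.smul (hρ x)
      · exact hφs.smul_right
    have h1 := (F.integral_comp_comm hint).symm
    simp only [_root_.map_smul, smul_eq_mul] at h1
    rw [← h1, heig φ hφc hφs x]
  -- main identity: F(ρ g x) * F y = F(ρ g y) * F x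
  have main : ∀ (g : G) (x y : X), F (ρ g x) * F y = F (ρ g y) * F x := by
    intro g x y
    set f : G → ℂ := fun h => F (ρ h x) * F y - F (ρ h y) * F x with hfdef
    have hfc : Continuous f :=
      ((F.continuous.comp (hρ x)).mul continuous_const).sub
        ((F.continuous.comp (hρ y)).mul continuous_const)
    have hvanish : ∀ φ : G → ℂ, Continuous φ → HasCompactSupport φ →
        ∫ h, φ h * f h ∂μ = 0 := by
      intro φ hφc hφs
      have hintx : Integrable (fun h => φ h * (F (ρ h x) * F y)) μ := by
        apply Continuous.integrable_of_hasCompactSupport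
        · exact hφc.mul ((F.continuous.comp (hρ x)).mul continuous_const)
        · exact hφs.mul_right
      have hinty : Integrable (fun h => φ h * (F (ρ h y) * F x)) μ := by
        apply Continuous.integrable_of_hasCompactSupport
        · exact hφc.mul ((F.continuous.comp (hρ y)).mul continuous_const)
        · exact hφs.mul_right
      have : ∫ h, φ h * f h ∂μ
          = (∫ h, φ h * (F (ρ h x) * F y) ∂μ) - ∫ h, φ h * (F (ρ h y) * F x) ∂μ := by
        rw [← integral_sub hintx hinty]
        congr 1; ext h; simp [hfdef]; ring
      rw [this]
      have hx : ∫ h, φ h * (F (ρ h x) * F y) ∂μ = (lam φ * F x) * F y := by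
        rw [← key φ hφc hφs x, ← integral_mul_const]
        congr 1; ext h; ring
      have hy : ∫ h, φ h * (F (ρ h y) * F x) ∂μ = (lam φ * F y) * F x := by
        rw [← key φ hφc hφs y, ← integral_mul_const]
        congr 1; ext h; ring
      rw [hx, hy]; ring
    have := continuous_eq_zero_of_integral_mul_eq_zero μ f hfc hvanish g
    simp only [hfdef, sub_eq_zero] at this
    exact this
  refine ⟨fun g => F (ρ g x₀) / F x₀, fun g x => ?_⟩
  have := main g x x₀
  field_simp
  linear_combination this
end
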